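/- Let L be the Schrödinger-Virasoro algebra and D an element of the 6-parameter family of derivations with parameters satisfying α† = −α, β† = −β, γ† = −γ (so that D(L) ⊆ Im(1−τ)). Then (1 + ξ + ξ²)·(1 ⊗ D)·D = 0, and consequently (L, [·,·], D) is a Lie bialgebra with cobracket Δ = D. -/

import Mathlib

open TensorProduct

/-- Index set for the basis of the Schrödinger–Virasoro algebra:
`Sum.inl n ↔ L_n`, `Sum.inr (Sum.inl n) ↔ Y_{n+1/2}`, `Sum.inr (Sum.inr n) ↔ M_n`. -/
abbrev SVIx : Type := ℤ ⊕ ℤ ⊕ ℤ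

variable (F : Type) [Field F] [CharZero F]

/-- Underlying space of the Schrödinger–Virasoro algebra: the free `F`-module on `SVIx`. -/
abbrev SVL := SVIx →₀ F

noncomputable def Lb (n : ℤ) : SVL F := Finsupp.single (Sum.inl n) 1
noncomputable def Yb (n : ℤ) : SVL F := Finsupp.single (Sum.inr (Sum.inl n)) 1
noncomputable def Mb (n : ℤ) : SVL F := Finsupp.single (Sum.inr (Sum.inr n)) 1

/-- The bracket of basis vectors.  Here `Yb n` stands for `Y_{n+1/2}`, so
`[L_m, Y_{n+1/2}] = ((n+1/2) - m/2) Y_{m+n+1/2}` and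
`[Y_{a+1/2}, Y_{b+1/2}] = (b-a) M_{a+b+1}`; all other brackets vanish. -/
noncomputable def brIx : SVIx → SVIx → SVL F
  | Sum.inl m, Sum.inl n => ((n - m : ℤ) : F) • Lb F (m + n)
  | Sum.inl m, Sum.inr (Sum.inl n) => (((2*n + 1 - m : ℤ) : F) / 2) • Yb F (m + n)
  | Sum.inl m, Sum.inr (Sum.inr n) => ((n : ℤ) : F) • Mb F (m + n)
  | Sum.inr (Sum.inl n), Sum.inl m => -((((2*n + 1 - m : ℤ) : F) / 2) • Yb F (m + n))
  | Sum.inr (Sum.inl a), Sum.inr (Sum.inl b) => ((b - a : ℤ) : F) • Mb F (a + b + 1)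
  | Sum.inr (Sum.inr n), Sum.inl m => -(((n : ℤ) : F) • Mb F (m + n))
  | _, _ => 0

/-- The bracket of the Schrödinger–Virasoro algebra: the bilinear extension of `brIx`. -/
noncomputable def bk : SVL F →ₗ[F] SVL F →ₗ[F] SVL F :=
  Finsupp.lsum F fun i => LinearMap.toSpanSingleton F (SVL F →ₗ[F] SVL F)
    (Finsupp.lsum F fun j => LinearMap.toSpanSingleton F (SVL F) (brIx F i j))

abbrev VV := SVL F ⊗[F] SVL F

noncomputable instance : AddCommGroup (VV F) := inferInstance

noncomputable instance : Zero (VV F) :=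
  (inferInstance : AddCommMonoid (VV F)).toAddMonoid.toZero

/-- The adjoint diagonal action of `L` on `L ⊗ L`, as a bilinear map:
`x · (a ⊗ b) = [x,a] ⊗ b + a ⊗ [x,b]`. -/
noncomputable def adVb : SVL F →ₗ[F] VV F →ₗ[F] VV F :=
  ((LinearMap.rTensorHom (SVL F) : (SVL F →ₗ[F] SVL F) →ₗ[F] (VV F →ₗ[F] VV F)) ∘ₗ bk F)
    + ((LinearMap.lTensorHom (SVL F) : (SVL F →ₗ[F] SVL F) →ₗ[F] (VV F →ₗ[F] VV F)) ∘ₗ bk F)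

/-- The twist map `τ(x ⊗ y) = y ⊗ x`. -/
noncomputable def tau : VV F →ₗ[F] VV F := (TensorProduct.comm F (SVL F) (SVL F)).toLinearMap

/-- The map `1 - τ`. -/
noncomputable def oneMinusTau : VV F →ₗ[F] VV F where
  toFun v := v - tau F v
  map_add' x y := by
    simp only [map_add]; exact sub_add_sub_comm x (tau F x) y (tau F y) ▸ rfl
  map_smul' c x := by simp only [map_smul, RingHom.id_apply, smul_sub]

/-- `Im (1 - τ) ⊂ L ⊗ L`. -/
noncomputable def skewIm : Submodule F (VV F) := LinearMap.range (oneMinusTau F)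
abbrev T3 := SVL F ⊗[F] (SVL F ⊗[F] SVL F)

/-- The bracket as a linear map on `L ⊗ L`. -/
noncomputable def lb : VV F →ₗ[F] SVL F := TensorProduct.lift (bk F)

/-- The linear map with `(a ⊗ b) ⊗ (a' ⊗ b') ↦ [a,a'] ⊗ b ⊗ b' + a ⊗ [b,a'] ⊗ b' + a ⊗ a' ⊗ [b,b']`,
so that the classical Yang–Baxter expression is `c(r) = cmap (r ⊗ r)`. -/
noncomputable def cmap : (VV F ⊗[F] VV F) →ₗ[F] T3 F :=
  ((TensorProduct.map (lb F) (LinearMap.id : VV F →ₗ[F] VV F)) ∘ₗ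
      (TensorProduct.tensorTensorTensorComm F (SVL F) (SVL F) (SVL F) (SVL F)).toLinearMap)
  + ((LinearMap.lTensor (SVL F)
        ((TensorProduct.map (lb F) (LinearMap.id : SVL F →ₗ[F] SVL F)) ∘ₗ
          (TensorProduct.assoc F (SVL F) (SVL F) (SVL F)).symm.toLinearMap)) ∘ₗ
      (TensorProduct.assoc F (SVL F) (SVL F) (VV F)).toLinearMap)
  + (((TensorProduct.assoc F (SVL F) (SVL F) (SVL F)).toLinearMap) ∘ₗ
      (TensorProduct.map (LinearMap.id : VV F →ₗ[F] VV F) (lb F)) ∘ₗ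
      (TensorProduct.tensorTensorTensorComm F (SVL F) (SVL F) (SVL F) (SVL F)).toLinearMap)

/-- The classical Yang–Baxter expression `c(r)`. -/
noncomputable def cyb (r : VV F) : T3 F := cmap F (r ⊗ₜ[F] r)

/-- The adjoint diagonal action of `x ∈ L` on `L ⊗ L ⊗ L`. -/
noncomputable def adT3 (x : SVL F) : T3 F →ₗ[F] T3 F :=
  LinearMap.rTensor (VV F) (bk F x) + LinearMap.lTensor (SVL F) (adVb F x)

/-- The cyclic map `ξ : x₁ ⊗ x₂ ⊗ x₃ ↦ x₂ ⊗ x₃ ⊗ x₁`. -/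
noncomputable def xi : T3 F →ₗ[F] T3 F :=
  (TensorProduct.assoc F (SVL F) (SVL F) (SVL F)).toLinearMap ∘ₗ
    (TensorProduct.comm F (SVL F) (VV F)).toLinearMap

/-- `1 + ξ + ξ²` applied to an element of `L ⊗ L ⊗ L`. -/
noncomputable def cyclicSum (t : T3 F) : T3 F := t + xi F t + xi F (xi F t)

noncomputable instance : Zero (T3 F) :=
  (inferInstance : AddCommMonoid (T3 F)).toAddMonoid.toZero

/-- Values on basis elements of the special derivations `D` with parameters
`(α, α†, β, β†, γ, γ†)`:  `D(L_n) = (nα+γ) M₀⊗M_n + (nα†+γ†) M_n⊗M₀`,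
`D(Y_{n+1/2}) = β M₀⊗Y_{n+1/2} + β† Y_{n+1/2}⊗M₀`, `D(M_n) = 2(β M₀⊗M_n + β† M_n⊗M₀)`. -/
noncomputable def dval (a a' b b' c c' : F) : SVIx → VV F
  | Sum.inl n => (((n : ℤ) : F) * a + c) • (Mb F 0 ⊗ₜ[F] Mb F n)
      + (((n : ℤ) : F) * a' + c') • (Mb F n ⊗ₜ[F] Mb F 0)
  | Sum.inr (Sum.inl n) => b • (Mb F 0 ⊗ₜ[F] Yb F n) + b' • (Yb F n ⊗ₜ[F] Mb F 0)
  | Sum.inr (Sum.inr n) => (2 * b) • (Mb F 0 ⊗ₜ[F] Mb F n) + (2 * b') • (Mb F n ⊗ₜ[F] Mb F 0)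

/-- The special derivation with parameters `(α, α†, β, β†, γ, γ†)`. -/
noncomputable def Dmap (a a' b b' c c' : F) : SVL F →ₗ[F] VV F :=
  Finsupp.lsum F fun i => LinearMap.toSpanSingleton F (VV F) (dval F a a' b b' c c' i)

/-- `D` is a derivation from `L` to the `L`-module `L ⊗ L`. -/
def IsDer (D : SVL F →ₗ[F] VV F) : Prop :=
  ∀ x y : SVL F, D (bk F x y) = adVb F x (D y) - adVb F y (D x)


set_option linter.unusedSectionVars false
set_option maxHeartbeats 2000000

lemma bk_single (i j : SVIx) (s t : F) :
    bk F (Finsupp.single i s) (Finsupp.single j t) = (s * t) • brIx F i j := by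
  simp [bk, Finsupp.lsum_single, LinearMap.toSpanSingleton_apply, smul_smul]

lemma Dmap_single (a a' b b' c c' : F) (i : SVIx) (s : F) :
    Dmap F a a' b b' c c' (Finsupp.single i s) = s • dval F a a' b b' c c' i := by
  simp [Dmap, LinearMap.toSpanSingleton_apply]

lemma adVb_tmul (x u v : SVL F) :
    adVb F x (u ⊗ₜ[F] v) = bk F x u ⊗ₜ[F] v + u ⊗ₜ[F] bk F x v := by
  simp [adVb]

lemma xi_tmul (x y z : SVL F) : xi F (x ⊗ₜ[F] (y ⊗ₜ[F] z)) = y ⊗ₜ[F] (z ⊗ₜ[F] x) := by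
  simp [xi]

lemma tau_tmul (x y : SVL F) : tau F (x ⊗ₜ[F] y) = y ⊗ₜ[F] x := rfl

lemma oneMinusTau_apply (v : VV F) : oneMinusTau F v = v - tau F v := rfl

lemma sL (n : ℤ) : (Finsupp.single (Sum.inl n) (1:F) : SVL F) = Lb F n := rfl
lemma sY (n : ℤ) : (Finsupp.single (Sum.inr (Sum.inl n)) (1:F) : SVL F) = Yb F n := rfl
lemma sM (n : ℤ) : (Finsupp.single (Sum.inr (Sum.inr n)) (1:F) : SVL F) = Mb F n := rfl

lemma bk_LL (m n : ℤ) : bk F (Lb F m) (Lb F n) = ((n - m : ℤ) : F) • Lb F (m + n) := by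
  simp [Lb, bk_single, brIx]
lemma bk_LY (m n : ℤ) :
    bk F (Lb F m) (Yb F n) = (((2*n + 1 - m : ℤ) : F) / 2) • Yb F (m + n) := by
  simp [Lb, Yb, bk_single, brIx]
lemma bk_LM (m n : ℤ) : bk F (Lb F m) (Mb F n) = ((n : ℤ) : F) • Mb F (m + n) := by
  simp [Lb, Mb, bk_single, brIx]
lemma bk_YL (n m : ℤ) :
    bk F (Yb F n) (Lb F m) = -((((2*n + 1 - m : ℤ) : F) / 2) • Yb F (m + n)) := by
  simp [Lb, Yb, bk_single, brIx]
lemma bk_YY (p q : ℤ) : bk F (Yb F p) (Yb F q) = ((q - p : ℤ) : F) • Mb F (p + q + 1) := by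
  simp [Yb, Mb, bk_single, brIx]
lemma bk_ML (n m : ℤ) : bk F (Mb F n) (Lb F m) = -(((n : ℤ) : F) • Mb F (m + n)) := by
  simp [Lb, Mb, bk_single, brIx]
lemma bk_YM (p n : ℤ) : bk F (Yb F p) (Mb F n) = 0 := by simp [Yb, Mb, bk_single, brIx]
lemma bk_MY (n p : ℤ) : bk F (Mb F n) (Yb F p) = 0 := by simp [Yb, Mb, bk_single, brIx]
lemma bk_MM (m n : ℤ) : bk F (Mb F m) (Mb F n) = 0 := by simp [Mb, bk_single, brIx]

variable (a a' b b' c c' : F)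

lemma Dmap_Lb (n : ℤ) : Dmap F a a' b b' c c' (Lb F n)
    = (((n : ℤ) : F) * a + c) • (Mb F 0 ⊗ₜ[F] Mb F n)
      + (((n : ℤ) : F) * a' + c') • (Mb F n ⊗ₜ[F] Mb F 0) := by
  simp [Lb, Dmap_single, dval]
lemma Dmap_Yb (n : ℤ) : Dmap F a a' b b' c c' (Yb F n)
    = b • (Mb F 0 ⊗ₜ[F] Yb F n) + b' • (Yb F n ⊗ₜ[F] Mb F 0) := by
  simp [Yb, Dmap_single, dval]
lemma Dmap_Mb (n : ℤ) : Dmap F a a' b b' c c' (Mb F n)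
    = (2 * b) • (Mb F 0 ⊗ₜ[F] Mb F n) + (2 * b') • (Mb F n ⊗ₜ[F] Mb F 0) := by
  simp [Mb, Dmap_single, dval]

/-- For skew parameters (`α† = -α`, `β† = -β`, `γ† = -γ`) the special derivation `D`
satisfies `(1+ξ+ξ²) ∘ (1 ⊗ D) ∘ D = 0`, has image in `Im(1-τ)`, and is compatible
with the bracket, so `(L, [·,·], D)` is a Lie bialgebra. -/
theorem sv_D_skew_gives_lieBialgebra :
    ∀ a b c : F,
      (∀ x : SVL F, cyclicSum F (LinearMap.lTensor (SVL F) (Dmap F a (-a) b (-b) c (-c))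
        (Dmap F a (-a) b (-b) c (-c) x)) = 0) ∧
      (∀ x : SVL F, Dmap F a (-a) b (-b) c (-c) x ∈ skewIm F) ∧
      IsDer F (Dmap F a (-a) b (-b) c (-c)) := by
  intro a b c
  set D := Dmap F a (-a) b (-b) c (-c) with hD
  have h0 : D (Mb F 0) = 0 := by rw [hD, Dmap_Mb]; module
  refine ⟨?_, ?_, ?_⟩
  · -- cyclic sum vanishes
    have key : (LinearMap.id + xi F + xi F ∘ₗ xi F) ∘ₗ
        LinearMap.lTensor (SVL F) D ∘ₗ D = 0 := by
      apply Finsupp.lhom_ext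
      intro i s
      rw [← Finsupp.smul_single_one i s]
      rcases i with n | n | n <;>
        simp only [LinearMap.comp_apply, map_smul, LinearMap.add_apply, LinearMap.id_apply,
          LinearMap.zero_apply, sL, sY, sM, hD, Dmap_Lb, Dmap_Yb, Dmap_Mb, map_add,
          LinearMap.lTensor_tmul, TensorProduct.tmul_add, TensorProduct.tmul_smul,
          smul_add, smul_zero, xi_tmul, smul_smul] <;>
        module
    intro x
    have := LinearMap.congr_fun key x
    simpa [cyclicSum, LinearMap.comp_apply] using this
  · -- image in Im(1 - τ)
    have key2 : D = (oneMinusTau F) ∘ₗ Dmap F a 0 b 0 c 0 := by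
      apply Finsupp.lhom_ext
      intro i s
      rw [← Finsupp.smul_single_one i s]
      rcases i with n | n | n <;>
        simp only [LinearMap.comp_apply, map_smul, sL, sY, sM, hD, Dmap_Lb, Dmap_Yb, Dmap_Mb,
          oneMinusTau_apply, map_add, map_smul, tau_tmul, mul_zero, add_zero, zero_smul,
          smul_zero, mul_one] <;>
        module
    intro x
    exact ⟨Dmap F a 0 b 0 c 0 x, by rw [key2]; rfl⟩
  · -- derivation property
    have key3 : (bk F).compr₂ D = (adVb F).compl₂ D - ((adVb F).compl₂ D).flip := by
      refine Finsupp.lhom_ext fun i s => Finsupp.lhom_ext fun j t => ?_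
      rw [← Finsupp.smul_single_one i s, ← Finsupp.smul_single_one j t]
      rcases i with m | m | m <;> rcases j with n | n | n <;>
        · simp only [map_smul, LinearMap.smul_apply, LinearMap.compr₂_apply,
            LinearMap.sub_apply, LinearMap.compl₂_apply, LinearMap.flip_apply, sL, sY, sM, hD,
            bk_LL, bk_LY, bk_LM, bk_YL, bk_YY, bk_ML, bk_YM, bk_MY, bk_MM,
            Dmap_Lb, Dmap_Yb, Dmap_Mb, map_add, map_smul, map_neg, map_zero,
            adVb_tmul, TensorProduct.tmul_add, TensorProduct.add_tmul,
            TensorProduct.smul_tmul, TensorProduct.tmul_smul, smul_add, smul_neg, smul_zero,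
            add_zero, zero_add, neg_zero, TensorProduct.tmul_zero, TensorProduct.zero_tmul,
            add_zero, smul_smul]
          ring_nf
          match_scalars <;> push_cast <;> ring
    intro x y
    have := LinearMap.congr_fun (LinearMap.congr_fun key3 x) y
    simpa [LinearMap.compr₂_apply, LinearMap.compl₂_apply, LinearMap.flip_apply] using this
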